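/- Let q be an odd prime power, b ∈ F_{q²} with b + b^q = 1 and b ≠ b^q, and a ∈ F_{q²}^× with a ≠ 1 and a² ≠ 1. Define X, Y, Z as the matrices in Construction 2.2 over F_{q²}. There is no symmetric invertible 3×3 matrix B over F_{q²} such that X^T B X = B, Y^T B Y = B, and Z^T B Z = B. -/

import Mathlib

open Matrix

/-- There is no symmetric invertible matrix `B` simultaneously invariant under
`X`, `Y`, `Z` of Construction 2.2 (so `⟨X,Y,Z⟩` lies in no orthogonal group `SO₃(q)`). -/
theorem stmt_7 (p f q : ℕ) (hp : Nat.Prime p) (hpodd : Odd p) (hq : q = p ^ f)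
    (F : Type) [Field F] [Fintype F] (hF : Fintype.card F = q ^ 2)
    (b : F) (hb1 : b + b ^ q = 1) (hb2 : b ≠ b ^ q)
    (a : Fˣ) (ha1 : (a : F) ≠ 1) (ha2 : (a : F) ^ 2 ≠ 1) :
    ¬ ∃ B : Matrix (Fin 3) (Fin 3) F, B.IsSymm ∧ IsUnit B ∧
      (!![-b ^ q, b, b ^ (q + 1); 1, 0, b ^ q; 1, 1, -b] : Matrix (Fin 3) (Fin 3) F)ᵀ * B *
        !![-b ^ q, b, b ^ (q + 1); 1, 0, b ^ q; 1, 1, -b] = B ∧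
      (!![0, 0, (a : F); 0, -1, 0; (a : F)⁻¹, 0, 0] : Matrix (Fin 3) (Fin 3) F)ᵀ * B *
        !![0, 0, (a : F); 0, -1, 0; (a : F)⁻¹, 0, 0] = B ∧
      (!![0, 0, 1; 0, -1, 0; 1, 0, 0] : Matrix (Fin 3) (Fin 3) F)ᵀ * B *
        !![0, 0, 1; 0, -1, 0; 1, 0, 0] = B := by
  -- the characteristic is odd
  have h2 : (2 : F) ≠ 0 := by
    intro h20
    obtain ⟨n, hrp, hcard⟩ := FiniteField.card F (ringChar F)
    have hr2 : ringChar F = 2 := (Nat.prime_dvd_prime_iff_eq hrp Nat.prime_two).mp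
      ((CharP.cast_eq_zero_iff F (ringChar F) 2).mp h20)
    rw [hr2, hF, hq, ← pow_mul] at hcard
    have h2p : (2 : ℕ) ∣ p := Nat.Prime.dvd_of_dvd_pow Nat.prime_two
      (by rw [hcard]; exact dvd_pow_self 2 n.pos.ne')
    have hp2 : p = 2 := ((Nat.prime_dvd_prime_iff_eq Nat.prime_two hp).mp h2p).symm
    rw [hp2] at hpodd
    exact absurd hpodd (by decide)
  rintro ⟨B, hsymm, hunit, hX, hY, hZ⟩
  have haF : (a : F) ≠ 0 := Units.ne_zero a
  -- extract scalar equations from the invariance conditions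
  have e00 := congrFun (congrFun hZ 0) 0
  have e01 := congrFun (congrFun hZ 0) 1
  have f00 := congrFun (congrFun hY 0) 0
  have f01 := congrFun (congrFun hY 0) 1
  have g00 := congrFun (congrFun hX 0) 0
  have g11 := congrFun (congrFun hX 1) 1
  simp [Matrix.mul_apply, Fin.sum_univ_three, Matrix.transpose_apply, Matrix.vecHead,
    Matrix.vecTail] at e00 e01 f00 f01 g00 g11
  rw [e00] at f00
  rw [← e01] at f01
  field_simp at f00 f01
  -- symmetry of B
  have hs10 : B 0 1 = B 1 0 := congrFun (congrFun hsymm 1) 0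
  have hs20 : B 0 2 = B 2 0 := congrFun (congrFun hsymm 2) 0
  have hs12 : B 2 1 = B 1 2 := congrFun (congrFun hsymm 1) 2
  -- deduce that most entries of B vanish
  have hB00 : B 0 0 = 0 := by
    rcases mul_eq_zero.mp (show B 0 0 * ((a : F) ^ 2 - 1) = 0 by linear_combination -f00) with
      h | h
    · exact h
    · exact absurd (sub_eq_zero.mp h) ha2
  have hB21 : B 2 1 = 0 := by
    rcases mul_eq_zero.mp (show B 2 1 * ((a : F) - 1) = 0 by linear_combination f01) with
      h | h
    · exact h
    · exact absurd (sub_eq_zero.mp h) ha1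
  have hB22 : B 2 2 = 0 := by rw [e00, hB00]
  have hB01 : B 0 1 = 0 := by rw [← e01, hB21, neg_zero]
  have hB10 : B 1 0 = 0 := by rw [← hs10, hB01]
  have hB12 : B 1 2 = 0 := by rw [← hs12, hB21]
  simp only [hB00, hB10, hB01, hB21, hB12, hB22, ← hs20] at g00 g11
  -- now g00 : -2 b^q B02 + B11 = 0 and g11 : 2 b B02 = B11
  have hB02 : B 0 2 = 0 := by
    rcases mul_eq_zero.mp (show B 0 2 * (2 * (b - b ^ q)) = 0 by linear_combination g11 + g00)
      with h | h
    · exact h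
    · rcases mul_eq_zero.mp h with h' | h'
      · exact absurd h' h2
      · exact absurd (sub_eq_zero.mp h') hb2
  have hB20 : B 2 0 = 0 := by rw [← hs20, hB02]
  have hB11 : B 1 1 = 0 := by rw [hB02] at g11; linear_combination -g11
  -- hence B = 0, contradicting invertibility
  have hB : B = 0 := by
    ext i j
    fin_cases i <;> fin_cases j <;>
      simp [hB00, hB01, hB02, hB10, hB11, hB12, hB20, hB21, hB22]
  rw [hB] at hunit
  exact not_isUnit_zero hunit
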